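/- For f(w) = w^p with 0 < p < 1 and any δ > 0, the δ-smoothing g of f satisfies g(w) ≤ f(w) for all w ≥ 0. -/

import Mathlib

open Real

private lemma hpoly (p x : ℝ) (hx : 0 < x) :
    HasDerivAt (fun y : ℝ => y^(p-1) - ((p-2)*(p-3)/2 + (-(p-1)*(p-3))*y + (p-1)*(p-2)/2*y^2))
      ((p-1)*x^(p-2) - ((-(p-1)*(p-3)) + (p-1)*(p-2)*x)) x := by
  have h1 : HasDerivAt (fun y : ℝ => y ^ (p-1)) ((p-1) * x ^ (p-1-1)) x :=
    Real.hasDerivAt_rpow_const (Or.inl hx.ne')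
  have h2 : HasDerivAt (fun y : ℝ => (p-2)*(p-3)/2 + (-(p-1)*(p-3))*y + (p-1)*(p-2)/2*y^2)
      (0 + (-(p-1)*(p-3)) * 1 + (p-1)*(p-2)/2*(2*x^1)) x := by
    exact ((hasDerivAt_const x _).add ((hasDerivAt_id x).const_mul _)).add
      ((hasDerivAt_pow 2 x).const_mul _)
  have := h1.fun_sub h2
  refine this.congr_deriv ?_
  ring_nf

private lemma hpoly2 (p x : ℝ) (hx : 0 < x) :
    HasDerivAt (fun y : ℝ => (p-1)*y^(p-2) - (-(p-1)*(p-3)) - (p-1)*(p-2)*y)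
      ((p-1)*(p-2)*x^(p-3) - (p-1)*(p-2)) x := by
  have h1 : HasDerivAt (fun y : ℝ => y ^ (p-2)) ((p-2) * x ^ (p-2-1)) x :=
    Real.hasDerivAt_rpow_const (Or.inl hx.ne')
  have h2 : HasDerivAt (fun y : ℝ => (p-1)*y^(p-2) - (-(p-1)*(p-3))) ((p-1) * ((p-2) * x ^ (p-2-1)) - 0) x :=
    (h1.const_mul (p-1)).sub (hasDerivAt_const x _)
  have h3 : HasDerivAt (fun y : ℝ => (p-1)*(p-2)*y) ((p-1)*(p-2)*1) x :=
    (hasDerivAt_id x).const_mul _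
  have := h2.fun_sub h3
  refine this.congr_deriv ?_
  rw [show p - 2 - 1 = p - 3 by ring]
  ring

-- H1 x ≤ 0 for x ∈ (0,1]
private lemma H1_nonpos (p : ℝ) (hp1 : p < 1) (x : ℝ) (hx0 : 0 < x) (hx1 : x ≤ 1) :
    (p-1)*x^(p-2) - (-(p-1)*(p-3)) - (p-1)*(p-2)*x ≤ 0 := by
  set H1 : ℝ → ℝ := fun y => (p-1)*y^(p-2) - (-(p-1)*(p-3)) - (p-1)*(p-2)*y with hH1
  have mono : MonotoneOn H1 (Set.Icc x 1) := by
    apply monotoneOn_of_deriv_nonneg (convex_Icc x 1)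
    · intro y hy
      exact (hpoly2 p y (lt_of_lt_of_le hx0 hy.1)).continuousAt.continuousWithinAt
    · intro y hy
      rw [interior_Icc] at hy
      exact (hpoly2 p y (hx0.trans hy.1)).differentiableAt.differentiableWithinAt
    · intro y hy
      rw [interior_Icc] at hy
      have hy0 : 0 < y := hx0.trans hy.1
      rw [(hpoly2 p y hy0).deriv]
      have h1 : (1:ℝ) ≤ y ^ (p-3) :=
        Real.one_le_rpow_of_pos_of_le_one_of_nonpos hy0 hy.2.le (by linarith)
      have h2 : 0 ≤ (p-1)*(p-2) := by nlinarith
      nlinarith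
  have hx1' : H1 1 = 0 := by
    simp only [hH1, Real.one_rpow]
    ring
  have := mono (Set.left_mem_Icc.2 hx1) (Set.right_mem_Icc.2 hx1) hx1
  rw [hx1'] at this
  exact this

private lemma key (p : ℝ) (hp0 : 0 < p) (hp1 : p < 1) (t : ℝ) (ht0 : 0 < t) (ht1 : t ≤ 1) :
    (p-2)*(p-3)/2 + (-(p-1)*(p-3))*t + (p-1)*(p-2)/2*t^2 ≤ t ^ (p-1) := by
  set H : ℝ → ℝ := fun y => y^(p-1) - ((p-2)*(p-3)/2 + (-(p-1)*(p-3))*y + (p-1)*(p-2)/2*y^2)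
    with hH
  have anti : AntitoneOn H (Set.Icc t 1) := by
    apply antitoneOn_of_deriv_nonpos (convex_Icc t 1)
    · intro y hy
      exact (hpoly p y (lt_of_lt_of_le ht0 hy.1)).continuousAt.continuousWithinAt
    · intro y hy
      rw [interior_Icc] at hy
      exact (hpoly p y (ht0.trans hy.1)).differentiableAt.differentiableWithinAt
    · intro y hy
      rw [interior_Icc] at hy
      have hy0 : 0 < y := ht0.trans hy.1
      rw [(hpoly p y hy0).deriv]
      have := H1_nonpos p hp1 y hy0 hy.2.le
      linarith
  have hH1 : H 1 = 0 := by
    simp only [hH, Real.one_rpow]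
    ring
  have := anti (Set.left_mem_Icc.2 ht1) (Set.right_mem_Icc.2 ht1) ht1
  rw [hH1] at this
  simp only [hH] at this
  linarith

theorem stmt_14 (p δ : ℝ) (hp0 : 0 < p) (hp1 : p < 1) (hδ : 0 < δ)
    (f : ℝ → ℝ) (hf : f = fun w => w ^ p)
    (g : ℝ → ℝ)
    (hg : g = fun w =>
      if w ≤ δ then
        (3 * f δ / δ - 2 * deriv f δ + δ * deriv (deriv f) δ / 2) * w +
        (-6 * f δ / δ ^ 2 + 6 * deriv f δ / δ - 2 * deriv (deriv f) δ) / 2 * w ^ 2 +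
        (6 * f δ / δ ^ 3 - 6 * deriv f δ / δ ^ 2 + 3 * deriv (deriv f) δ / δ) / 6 * w ^ 3
      else f w) :
    ∀ w : ℝ, 0 ≤ w → g w ≤ f w := by
  subst hf
  have d1 : deriv (fun w : ℝ => w ^ p) δ = p * δ ^ (p-1) :=
    Real.deriv_rpow_const δ p
  have d2 : deriv (deriv (fun w : ℝ => w ^ p)) δ = p * (p-1) * δ ^ (p-2) := by
    have hev : deriv (fun w : ℝ => w ^ p) =ᶠ[nhds δ] fun x => p * x ^ (p-1) := by
      filter_upwards [eventually_gt_nhds hδ] with x hx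
      exact Real.deriv_rpow_const x p
    rw [hev.deriv_eq]
    have hD : HasDerivAt (fun x : ℝ => p * x ^ (p-1)) (p * ((p-1) * δ ^ (p-1-1))) δ :=
      (Real.hasDerivAt_rpow_const (Or.inl hδ.ne')).const_mul p
    rw [hD.deriv, show p-1-1 = p-2 by ring]; ring
  intro w hw
  rw [hg]
  simp only
  by_cases hwδ : w ≤ δ
  · rw [if_pos hwδ, d1, d2]
    rcases eq_or_lt_of_le hw with h0 | h0
    · rw [← h0]
      norm_num [Real.zero_rpow hp0.ne']
    · have hD1 : (0:ℝ) < δ ^ (p-1) := Real.rpow_pos_of_pos hδ _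
      have e1 : δ ^ p = δ ^ (p-1) * δ := by
        rw [← Real.rpow_add_one hδ.ne' (p-1)]; ring_nf
      have e2 : δ ^ (p-1) = δ ^ (p-2) * δ := by
        rw [← Real.rpow_add_one hδ.ne' (p-2)]; ring_nf
      have e3 : w ^ p = w ^ (p-1) * w := by
        rw [← Real.rpow_add_one h0.ne' (p-1)]; ring_nf
      have e4 : (w/δ) ^ (p-1) * δ ^ (p-1) = w ^ (p-1) := by
        rw [Real.div_rpow hw hδ.le]
        field_simp
      have hk := key p hp0 hp1 (w/δ) (div_pos h0 hδ) ((div_le_one hδ).2 hwδ)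
      calc (3 * δ ^ p / δ - 2 * (p * δ ^ (p-1)) + δ * (p * (p-1) * δ ^ (p-2)) / 2) * w +
            (-6 * δ ^ p / δ ^ 2 + 6 * (p * δ ^ (p-1)) / δ - 2 * (p * (p-1) * δ ^ (p-2))) / 2 * w ^ 2 +
            (6 * δ ^ p / δ ^ 3 - 6 * (p * δ ^ (p-1)) / δ ^ 2 + 3 * (p * (p-1) * δ ^ (p-2)) / δ) / 6 * w ^ 3
          = (w * δ ^ (p-1)) *
            ((p-2)*(p-3)/2 + (-(p-1)*(p-3))*(w/δ) + (p-1)*(p-2)/2*(w/δ)^2) := by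
            rw [e1, e2]
            field_simp
            ring
        _ ≤ (w * δ ^ (p-1)) * ((w/δ) ^ (p-1)) := by
            apply mul_le_mul_of_nonneg_left hk
            positivity
        _ = w ^ p := by
            rw [e3]
            rw [show w * δ ^ (p-1) * (w/δ) ^ (p-1) = (w/δ) ^ (p-1) * δ ^ (p-1) * w by ring, e4]
  · rw [if_neg hwδ]
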